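/- Let n ≥ 1 and let F be a subset of a De Morgan lattice L. Then F is a Kalman upset of L if and only if there exist a Kleene lattice K, a homomorphism of De Morgan lattices h : L → K, and an upset G of K with F = h⁻¹(G). Moreover, F is a Kalman n-filter on L if and only if such K, h, G exist with G additionally an n-filter on K. -/
import Mathlib


/-- A De Morgan lattice: a distributive lattice with an antitone involution. -/
class DeMorgan (L : Type*) extends DistribLattice L where
  dneg : L → L
  dneg_dneg : ∀ x : L, dneg (dneg x) = x
  dneg_sup : ∀ x y : L, dneg (x ⊔ y) = dneg x ⊓ dneg y

prefix:max "∼" => DeMorgan.dneg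

section Defs

variable {α : Type*}

/-- An upward closed subset of a lattice. -/
def IsUpset [Lattice α] (F : Set α) : Prop :=
  ∀ ⦃x y : α⦄, x ∈ F → x ≤ y → y ∈ F

/-- A lattice filter: an upset closed under binary meets. -/
def IsLatFilter [Lattice α] (F : Set α) : Prop :=
  IsUpset F ∧ ∀ x y : α, x ∈ F → y ∈ F → x ⊓ y ∈ F

/-- An `n`-filter: an upset such that for every nonempty finite `Y`, if the meet of
every nonempty subset of `Y` of size at most `n` lies in `F`, then so does the meet of `Y`. -/
def IsNFilter [Lattice α] (n : ℕ) (F : Set α) : Prop :=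
  IsUpset F ∧ ∀ (Y : Finset α) (hY : Y.Nonempty),
    (∀ (X : Finset α) (hX : X.Nonempty), X ⊆ Y → X.card ≤ n → X.inf' hX id ∈ F) →
    Y.inf' hY id ∈ F

/-- A prime upset: `x ⊔ y ∈ F` implies `x ∈ F` or `y ∈ F`. -/
def IsPrimeUpset [Lattice α] (F : Set α) : Prop :=
  ∀ x y : α, x ⊔ y ∈ F → x ∈ F ∨ y ∈ F

/-- A downward closed subset of a lattice. -/
def IsDownset [Lattice α] (I : Set α) : Prop :=
  ∀ ⦃x y : α⦄, x ∈ I → y ≤ x → y ∈ I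

/-- A lattice ideal: a downset closed under binary joins. -/
def IsIdeal [Lattice α] (I : Set α) : Prop :=
  IsDownset I ∧ ∀ x y : α, x ∈ I → y ∈ I → x ⊔ y ∈ I

/-- An `n`-ideal: the order dual notion of an `n`-filter. -/
def IsNIdeal [Lattice α] (n : ℕ) (I : Set α) : Prop :=
  IsDownset I ∧ ∀ (Y : Finset α) (hY : Y.Nonempty),
    (∀ (X : Finset α) (hX : X.Nonempty), X ⊆ Y → X.card ≤ n → X.sup' hX id ∈ I) →
    Y.sup' hY id ∈ I

variable {L : Type*} [DeMorgan L]

/-- Almost complete upset: `x ∈ F` implies `x ⊓ (y ⊔ ∼y) ∈ F`. -/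
def AlmostComplete (F : Set L) : Prop := ∀ x ∈ F, ∀ y : L, x ⊓ (y ⊔ ∼y) ∈ F

/-- Complete upset: almost complete and nonempty. -/
def IsCompleteUpset (F : Set L) : Prop := AlmostComplete F ∧ F.Nonempty

/-- Almost consistent upset: `(x ⊓ ∼x) ⊔ y ∈ F` implies `y ∈ F`. -/
def AlmostConsistent (F : Set L) : Prop := ∀ x y : L, (x ⊓ ∼x) ⊔ y ∈ F → y ∈ F

/-- Consistent upset: almost consistent and not total. -/
def IsConsistentUpset (F : Set L) : Prop := AlmostConsistent F ∧ F ≠ Set.univ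

/-- Classical upset: complete and consistent. -/
def IsClassicalUpset (F : Set L) : Prop := IsCompleteUpset F ∧ IsConsistentUpset F

/-- Kalman upset. -/
def IsKalmanUpset (F : Set L) : Prop :=
  ∀ x y z u : L, ((x ⊓ ∼x) ⊓ z) ⊔ u ∈ F → ((y ⊔ ∼y) ⊓ z) ⊔ u ∈ F

/-- A homomorphism of De Morgan lattices. -/
def IsDMHom {L M : Type*} [DeMorgan L] [DeMorgan M] (h : L → M) : Prop :=
  (∀ x y : L, h (x ⊓ y) = h x ⊓ h y) ∧ (∀ x y : L, h (x ⊔ y) = h x ⊔ h y) ∧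
    ∀ x : L, h (∼x) = ∼(h x)

/-- The filter generated by all elements of the form `x ⊔ ∼x`. -/
def Fcomp (L : Type*) [DeMorgan L] : Set L :=
  {a | ∃ (s : Finset L) (hs : s.Nonempty), s.inf' hs (fun x => x ⊔ ∼x) ≤ a}

/-- The `n`-filter generated by a set. -/
def nFilterGen (n : ℕ) (U : Set L) : Set L :=
  ⋂₀ {F : Set L | IsNFilter n F ∧ U ⊆ F}

/-- `Comp U`. -/
def CompCl (U : Set L) : Set L := {x | ∃ a ∈ U, ∃ f ∈ Fcomp L, a ⊓ f ≤ x}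

/-- `Cons U`. -/
def ConsCl (U : Set L) : Set L := {x | ∃ f ∈ Fcomp L, ∼f ⊔ x ∈ U}

/-- A congruence of De Morgan lattices, as a binary relation. -/
def IsCongruence (θ : L → L → Prop) : Prop :=
  Equivalence θ ∧
  (∀ a b c d : L, θ a b → θ c d → θ (a ⊓ c) (b ⊓ d)) ∧
  (∀ a b c d : L, θ a b → θ c d → θ (a ⊔ c) (b ⊔ d)) ∧
  ∀ a b : L, θ a b → θ (∼a) (∼b)

end Defs

/-- The four-element De Morgan lattice `DM₁` on `Bool × Bool`. -/
instance : DeMorgan (Bool × Bool) :=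
  { (inferInstance : DistribLattice (Bool × Bool)) with
    dneg := fun p => (!p.2, !p.1)
    dneg_dneg := by decide
    dneg_sup := by decide }

/-- Powers of `DM₁`, with componentwise operations. -/
instance {ι : Type*} : DeMorgan (ι → Bool × Bool) :=
  { (inferInstance : DistribLattice (ι → Bool × Bool)) with
    dneg := fun f i => ∼(f i)
    dneg_dneg := fun f => funext fun i => DeMorgan.dneg_dneg (f i)
    dneg_sup := fun f g => funext fun i => DeMorgan.dneg_sup (f i) (g i) }

universe u

namespace Statement9Aux

variable {L : Type u} [DeMorgan L]

lemma dneg_inf (x y : L) : ∼(x ⊓ y) = ∼x ⊔ ∼y := by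
  have h := DeMorgan.dneg_sup (∼x) (∼y)
  rw [DeMorgan.dneg_dneg, DeMorgan.dneg_dneg] at h
  rw [← h, DeMorgan.dneg_dneg]

lemma dneg_le_dneg {x y : L} (h : x ≤ y) : ∼y ≤ ∼x := by
  have h2 := DeMorgan.dneg_sup x y
  rw [sup_eq_right.mpr h] at h2
  rw [h2]; exact inf_le_left

/-- `R a b`: every Kalman upset containing `a` contains `b`. -/
def R (a b : L) : Prop :=
  ∀ F : Set L, IsUpset F → IsKalmanUpset F → a ∈ F → b ∈ F

lemma R.refl (a : L) : R a a := fun _ _ _ h => h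

lemma R.trans {a b c : L} (h1 : R a b) (h2 : R b c) : R a c :=
  fun F hU hK ha => h2 F hU hK (h1 F hU hK ha)

lemma R.of_le {a b : L} (h : a ≤ b) : R a b := fun _ hU _ ha => hU ha h

lemma R.inf_right {a b : L} (c : L) (h : R a b) : R (a ⊓ c) (b ⊓ c) := by
  intro F hU hK hm
  refine h {x | x ⊓ c ∈ F} (fun x y hx hxy => hU hx (inf_le_inf_right c hxy)) ?_ hm
  intro x y z u hmem
  simp only [Set.mem_setOf_eq] at hmem ⊢
  have e1 : (((x ⊓ ∼x) ⊓ z) ⊔ u) ⊓ c = ((x ⊓ ∼x) ⊓ (z ⊓ c)) ⊔ (u ⊓ c) := by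
    rw [inf_sup_right, inf_assoc]
  have e2 : (((y ⊔ ∼y) ⊓ z) ⊔ u) ⊓ c = ((y ⊔ ∼y) ⊓ (z ⊓ c)) ⊔ (u ⊓ c) := by
    rw [inf_sup_right, inf_assoc]
  rw [e1] at hmem; rw [e2]
  exact hK x y (z ⊓ c) (u ⊓ c) hmem

lemma R.sup_right {a b : L} (c : L) (h : R a b) : R (a ⊔ c) (b ⊔ c) := by
  intro F hU hK hm
  refine h {x | x ⊔ c ∈ F} (fun x y hx hxy => hU hx (sup_le_sup_right hxy c)) ?_ hm
  intro x y z u hmem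
  simp only [Set.mem_setOf_eq] at hmem ⊢
  rw [sup_assoc] at hmem ⊢
  exact hK x y z (u ⊔ c) hmem

lemma R.neg {a b : L} (h : R a b) : R (∼b) (∼a) := by
  intro F hU hK hm
  by_contra hna
  refine (h {x | ∼x ∉ F} ?_ ?_ hna) hm
  · intro x y hx hxy hyF
    exact hx (hU hyF (dneg_le_dneg hxy))
  · intro x y z u hmem hcon
    apply hmem
    have e1 : ∼(((x ⊓ ∼x) ⊓ z) ⊔ u) = ((∼x ⊔ x) ⊓ ∼u) ⊔ (∼z ⊓ ∼u) := by
      rw [DeMorgan.dneg_sup, dneg_inf, dneg_inf, DeMorgan.dneg_dneg, inf_sup_right]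
    have e2 : ∼(((y ⊔ ∼y) ⊓ z) ⊔ u) = ((∼y ⊓ y) ⊓ ∼u) ⊔ (∼z ⊓ ∼u) := by
      rw [DeMorgan.dneg_sup, dneg_inf, DeMorgan.dneg_sup, DeMorgan.dneg_dneg, inf_sup_right]
    have key := hK (∼y) (∼x) (∼u) (∼z ⊓ ∼u)
    simp only [DeMorgan.dneg_dneg] at key
    rw [e1]
    exact key (e2 ▸ hcon)

lemma R.mem {a b : L} (h : R a b) {F : Set L} (hU : IsUpset F)
    (hK : IsKalmanUpset F) (ha : a ∈ F) : b ∈ F := h F hU hK ha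

/-- The key Kleene relation. -/
lemma kleene_R (a b : L) : R (a ⊓ ∼a) (b ⊔ ∼b) := by
  intro F hU hK hm
  have key := hK a b ((a ⊓ ∼a) ⊔ (b ⊔ ∼b)) (b ⊔ ∼b)
  rw [inf_sup_self] at key
  have e : ((b ⊔ ∼b) ⊓ ((a ⊓ ∼a) ⊔ (b ⊔ ∼b))) ⊔ (b ⊔ ∼b) = b ⊔ ∼b :=
    sup_eq_right.mpr inf_le_left
  rw [e] at key
  exact key (hU hm le_sup_left)

def kSetoid (L : Type u) [DeMorgan L] : Setoid L where
  r a b := R a b ∧ R b a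
  iseqv := ⟨fun a => ⟨R.refl a, R.refl a⟩, fun h => ⟨h.2, h.1⟩,
    fun h1 h2 => ⟨h1.1.trans h2.1, h2.2.trans h1.2⟩⟩

def KQ (L : Type u) [DeMorgan L] : Type u := Quotient (kSetoid L)

def mk (a : L) : KQ L := Quotient.mk (kSetoid L) a

lemma inf_congr {a b c d : L} (h1 : (kSetoid L).r a b) (h2 : (kSetoid L).r c d) :
    (kSetoid L).r (a ⊓ c) (b ⊓ d) := by
  constructor
  · have t1 := R.inf_right c h1.1
    have t2 := R.inf_right b h2.1
    rw [inf_comm c b, inf_comm d b] at t2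
    exact t1.trans t2
  · have t1 := R.inf_right d h1.2
    have t2 := R.inf_right a h2.2
    rw [inf_comm d a, inf_comm c a] at t2
    exact t1.trans t2

lemma sup_congr {a b c d : L} (h1 : (kSetoid L).r a b) (h2 : (kSetoid L).r c d) :
    (kSetoid L).r (a ⊔ c) (b ⊔ d) := by
  constructor
  · have t1 := R.sup_right c h1.1
    have t2 := R.sup_right b h2.1
    rw [sup_comm c b, sup_comm d b] at t2
    exact t1.trans t2
  · have t1 := R.sup_right d h1.2
    have t2 := R.sup_right a h2.2
    rw [sup_comm d a, sup_comm c a] at t2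
    exact t1.trans t2

instance : Min (KQ L) :=
  ⟨Quotient.map₂ (· ⊓ ·) (fun _ _ h1 _ _ h2 => inf_congr h1 h2)⟩

instance : Max (KQ L) :=
  ⟨Quotient.map₂ (· ⊔ ·) (fun _ _ h1 _ _ h2 => sup_congr h1 h2)⟩

lemma mk_inf (a b : L) : mk (a ⊓ b) = mk a ⊓ mk b := rfl
lemma mk_sup (a b : L) : mk (a ⊔ b) = mk a ⊔ mk b := rfl

instance : Lattice (KQ L) :=
  Lattice.mk'
    (fun p q => Quotient.inductionOn₂ p q fun a b => by
      show mk (a ⊔ b) = mk (b ⊔ a); rw [sup_comm])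
    (fun p q r => Quotient.inductionOn₃ p q r fun a b c => by
      show mk ((a ⊔ b) ⊔ c) = mk (a ⊔ (b ⊔ c)); rw [sup_assoc])
    (fun p q => Quotient.inductionOn₂ p q fun a b => by
      show mk (a ⊓ b) = mk (b ⊓ a); rw [inf_comm])
    (fun p q r => Quotient.inductionOn₃ p q r fun a b c => by
      show mk ((a ⊓ b) ⊓ c) = mk (a ⊓ (b ⊓ c)); rw [inf_assoc])
    (fun p q => Quotient.inductionOn₂ p q fun a b => by
      show mk (a ⊔ (a ⊓ b)) = mk a; rw [sup_inf_self])
    (fun p q => Quotient.inductionOn₂ p q fun a b => by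
      show mk (a ⊓ (a ⊔ b)) = mk a; rw [inf_sup_self])

instance : DistribLattice (KQ L) :=
  DistribLattice.ofInfSupLe fun p q r => Quotient.inductionOn₃ p q r fun a b c =>
    le_of_eq (by show mk (a ⊓ (b ⊔ c)) = mk ((a ⊓ b) ⊔ (a ⊓ c)); rw [inf_sup_left])

instance : DeMorgan (KQ L) :=
  { (inferInstance : DistribLattice (KQ L)) with
    dneg := Quotient.map (fun a => ∼a) (fun _ _ h => ⟨R.neg h.2, R.neg h.1⟩)
    dneg_dneg := fun p => Quotient.inductionOn p fun a => by
      show mk (∼∼a) = mk a; rw [DeMorgan.dneg_dneg]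
    dneg_sup := fun p q => Quotient.inductionOn₂ p q fun a b => by
      show mk (∼(a ⊔ b)) = mk (∼a ⊓ ∼b); rw [DeMorgan.dneg_sup] }

lemma mk_dneg (a : L) : ∼(mk a) = mk (∼a) := rfl

lemma mk_le_mk {a b : L} : mk a ≤ mk b ↔ R a b := by
  constructor
  · intro h
    have e : mk (a ⊔ b) = mk b := sup_eq_right.mpr h
    have h2 : (kSetoid L).r (a ⊔ b) b := Quotient.exact e
    exact (R.of_le le_sup_left).trans h2.1
  · intro h
    have h1 : R (a ⊔ b) b := by
      have := R.sup_right b h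
      rwa [sup_idem] at this
    have e : mk (a ⊔ b) = mk b := Quotient.sound ⟨h1, R.of_le le_sup_right⟩
    exact sup_eq_right.mp e

lemma kq_kleene (p q : KQ L) : p ⊓ ∼p ≤ q ⊔ ∼q :=
  Quotient.inductionOn₂ p q fun a b => by
    show mk (a ⊓ ∼a) ≤ mk (b ⊔ ∼b)
    exact mk_le_mk.mpr (kleene_R a b)

lemma mk_isDMHom : IsDMHom (mk : L → KQ L) :=
  ⟨fun _ _ => rfl, fun _ _ => rfl, fun _ => rfl⟩

section Hom

variable {K : Type u} [DeMorgan K]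

lemma hom_mono {h : L → K} (hh : IsDMHom h) : Monotone h := by
  intro a b hab
  have e : h a ⊔ h b = h b := by rw [← hh.2.1, sup_eq_right.mpr hab]
  exact sup_eq_right.mp e

lemma upset_pre {h : L → K} (hh : IsDMHom h) {G : Set K} (hG : IsUpset G) :
    IsUpset (h ⁻¹' G) := fun _ _ ha hab => hG ha (hom_mono hh hab)

lemma kal_pre (hkl : ∀ x y : K, x ⊓ ∼x ≤ y ⊔ ∼y) {h : L → K} (hh : IsDMHom h)
    {G : Set K} (hG : IsUpset G) : IsKalmanUpset (h ⁻¹' G) := by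
  intro x y z u hm
  simp only [Set.mem_preimage] at hm ⊢
  have e1 : h (((x ⊓ ∼x) ⊓ z) ⊔ u) = ((h x ⊓ ∼(h x)) ⊓ h z) ⊔ h u := by
    rw [hh.2.1, hh.1, hh.1, hh.2.2]
  have e2 : h (((y ⊔ ∼y) ⊓ z) ⊔ u) = ((h y ⊔ ∼(h y)) ⊓ h z) ⊔ h u := by
    rw [hh.2.1, hh.1, hh.2.1, hh.2.2]
  rw [e1] at hm; rw [e2]
  exact hG hm (sup_le_sup_right (inf_le_inf_right _ (hkl (h x) (h y))) _)

lemma inf'_cast {α : Type u} [SemilatticeInf α] {s t : Finset α} (h : s = t)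
    (hs : s.Nonempty) (ht : t.Nonempty) : s.inf' hs id = t.inf' ht id := by
  subst h; rfl

lemma hom_inf'_image [DecidableEq K] {h : L → K} (hh : ∀ a b : L, h (a ⊓ b) = h a ⊓ h b)
    (s : Finset L) (hs : s.Nonempty) (ht : (s.image h).Nonempty) :
    (s.image h).inf' ht id = h (s.inf' hs id) := by
  classical
  rw [Finset.inf'_image]
  have e := map_finset_inf' (InfHom.mk h hh) hs id
  simp only [Function.comp_def, id] at e ⊢
  exact e.symm

lemma nfil_pre {h : L → K} (hh : IsDMHom h) {n : ℕ} {G : Set K}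
    (hG : IsNFilter n G) : IsNFilter n (h ⁻¹' G) := by
  classical
  obtain ⟨hGu, hGn⟩ := hG
  refine ⟨upset_pre hh hGu, ?_⟩
  intro Y hY hall
  have him : (Y.image h).Nonempty := hY.image h
  have key : ∀ (X' : Finset K) (hX' : X'.Nonempty), X' ⊆ Y.image h → X'.card ≤ n →
      X'.inf' hX' id ∈ G := by
    intro X' hX' hsub hcard
    choose g hg1 hg2 using fun v : {v // v ∈ X'} => Finset.mem_image.mp (hsub v.2)
    set X : Finset L := X'.attach.image g with hXdef
    have hXne : X.Nonempty := (Finset.attach_nonempty_iff.mpr hX').image g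
    have hXsub : X ⊆ Y := by
      intro a ha
      obtain ⟨v, -, rfl⟩ := Finset.mem_image.mp ha
      exact hg1 v
    have hXcard : X.card ≤ n := by
      refine le_trans (le_trans Finset.card_image_le ?_) hcard
      rw [Finset.card_attach]
    have hmem := hall X hXne hXsub hXcard
    have himg : X.image h = X' := by
      ext w
      constructor
      · intro hw
        obtain ⟨x0, hx0, rfl⟩ := Finset.mem_image.mp hw
        obtain ⟨v, -, rfl⟩ := Finset.mem_image.mp hx0
        rw [hg2 v]; exact v.2
      · intro hw
        exact Finset.mem_image.mpr ⟨g ⟨w, hw⟩,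
          Finset.mem_image.mpr ⟨⟨w, hw⟩, Finset.mem_attach _ _, rfl⟩, hg2 ⟨w, hw⟩⟩
    have hXim : (X.image h).Nonempty := hXne.image h
    have hv : X'.inf' hX' id = h (X.inf' hXne id) := by
      rw [inf'_cast himg.symm hX' hXim]
      exact hom_inf'_image hh.1 X hXne hXim
    rw [hv]
    exact hmem
  have hfin := hGn (Y.image h) him key
  rw [hom_inf'_image hh.1 Y hY him] at hfin
  exact hfin

end Hom

end Statement9Aux

open Statement9Aux in
/-- Kalman upsets (resp. Kalman `n`-filters) of a De Morgan lattice are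
precisely the homomorphic preimages of upsets (resp. `n`-filters) of Kleene lattices. -/
theorem statement9 {L : Type u} [DeMorgan L] [Nonempty L] (n : ℕ) (hn : 1 ≤ n)
    (F : Set L) :
    ((IsUpset F ∧ IsKalmanUpset F) ↔
      ∃ (K : Type u) (_ : DeMorgan K) (_ : Nonempty K),
        (∀ x y : K, x ⊓ ∼x ≤ y ⊔ ∼y) ∧
        ∃ (h : L → K) (G : Set K), IsDMHom h ∧ IsUpset G ∧ F = h ⁻¹' G) ∧
    ((IsKalmanUpset F ∧ IsNFilter n F) ↔
      ∃ (K : Type u) (_ : DeMorgan K) (_ : Nonempty K),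
        (∀ x y : K, x ⊓ ∼x ≤ y ⊔ ∼y) ∧
        ∃ (h : L → K) (G : Set K), IsDMHom h ∧ IsNFilter n G ∧ F = h ⁻¹' G) := by
  classical
  have pre_eq : ∀ (F : Set L), IsUpset F → IsKalmanUpset F →
      F = (mk : L → KQ L) ⁻¹' (mk '' F) := by
    intro F hU hK
    ext b
    constructor
    · intro hb; exact ⟨b, hb, rfl⟩
    · rintro ⟨a, haF, hab⟩
      exact ((Quotient.exact hab).1).mem hU hK haF
  have img_upset : ∀ (F : Set L), IsUpset F → IsKalmanUpset F →
      IsUpset ((mk : L → KQ L) '' F) := by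
    intro F hU hK p q hp hpq
    obtain ⟨a, haF, rfl⟩ := hp
    induction q using Quotient.inductionOn with
    | h b => exact ⟨b, (mk_le_mk.mp hpq).mem hU hK haF, rfl⟩
  constructor
  · constructor
    · rintro ⟨hU, hKal⟩
      refine ⟨KQ L, inferInstance, ⟨mk (Classical.arbitrary L)⟩, kq_kleene, mk, mk '' F,
        mk_isDMHom, img_upset F hU hKal, pre_eq F hU hKal⟩
    · rintro ⟨K, _, _, hkl, h, G, hh, hGu, rfl⟩
      exact ⟨upset_pre hh hGu, kal_pre hkl hh hGu⟩
  · constructor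
    · rintro ⟨hKal, hNF⟩
      have hU : IsUpset F := hNF.1
      refine ⟨KQ L, inferInstance, ⟨mk (Classical.arbitrary L)⟩, kq_kleene, mk, mk '' F,
        mk_isDMHom, ⟨img_upset F hU hKal, ?_⟩, pre_eq F hU hKal⟩
      intro Y hY hall
      set T : Finset L := Y.image Quotient.out with hTdef
      have hTne : T.Nonempty := hY.image _
      have hTY : T.image mk = Y := by
        ext q
        constructor
        · intro hq
          obtain ⟨a, ha, rfl⟩ := Finset.mem_image.mp hq
          obtain ⟨p, hp, rfl⟩ := Finset.mem_image.mp ha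
          rw [show (mk (Quotient.out p) : KQ L) = p from Quotient.out_eq p]
          exact hp
        · intro hq
          exact Finset.mem_image.mpr ⟨Quotient.out q,
            Finset.mem_image.mpr ⟨q, hq, rfl⟩, Quotient.out_eq q⟩
      have hTim : (T.image mk).Nonempty := hTne.image _
      have hsmall : ∀ (X : Finset L) (hX : X.Nonempty), X ⊆ T → X.card ≤ n →
          X.inf' hX id ∈ F := by
        intro X hX hsub hcard
        have h1 : X.image mk ⊆ Y := by
          rw [← hTY]; exact Finset.image_subset_image hsub
        have h2 := hall (X.image mk) (hX.image _) h1
          (le_trans Finset.card_image_le hcard)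
        rw [hom_inf'_image (fun _ _ => rfl) X hX (hX.image _)] at h2
        obtain ⟨a, haF, hab⟩ := h2
        exact ((Quotient.exact hab).1).mem hU hKal haF
      have hfin := hNF.2 T hTne hsmall
      have : (T.image mk).inf' hTim id ∈ (mk : L → KQ L) '' F := by
        rw [hom_inf'_image (fun _ _ => rfl) T hTne hTim]
        exact ⟨_, hfin, rfl⟩
      rwa [inf'_cast hTY hTim hY] at this
    · rintro ⟨K, _, _, hkl, h, G, hh, hGn, rfl⟩
      exact ⟨kal_pre hkl hh hGn.1, nfil_pre hh hGn⟩
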